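/- arXiv:0708.4195 — 3 statements merged into one kernel-verified Lean document; each statement's English description precedes it below -/
import Mathlib

section
/- Let 𝒜 be a Banach algebra and 𝒰 an ultrafilter on an index set I. The ultrapower (𝒜)_𝒰 has an identity element if and only if 𝒜 has an identity element. -/
set_option maxSynthPendingDepth 3
set_option maxHeartbeats 1000000
set_option synthInstance.maxHeartbeats 1000000

noncomputable section

open Filter Metric Topology ContinuousLinearMap
open scoped ENNReal

universe u v w y

namespace UPaper

/-- The (topological) dual of a complex normed space. -/
abbrev Dl (E : Type u) [NormedAddCommGroup E] [NormedSpace ℂ E] : Type u := E →L[ℂ] ℂ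

/-- An ultrafilter is countably incomplete when it contains a decreasing sequence of
sets with empty intersection. -/
def CountablyIncomplete {I : Type u} (𝒰 : Ultrafilter I) : Prop :=
  ∃ U : ℕ → Set I, (∀ n, U n ∈ 𝒰) ∧ (∀ n, U (n + 1) ⊆ U n) ∧ (⋂ n, U n) = (∅ : Set I)

/-- `π` realises `F` as the ultrapower `(E)_𝒰` of the Banach space `E` along the
ultrafilter `𝒰`: it is a linear surjection from `ℓ^∞(E,I)` onto `F` such that
`‖π x‖ = lim_𝒰 ‖x_i‖`.  This forces the kernel of `π` to be exactly the closed subspace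
`𝒩_𝒰` of families with `lim_𝒰 ‖x_i‖ = 0`, so that `F` is isometrically isomorphic to the
quotient `ℓ^∞(E,I)/𝒩_𝒰`, i.e. to the Banach space ultrapower `(E)_𝒰`. -/
def IsUltrapower {I : Type u} (𝒰 : Ultrafilter I) {E : Type v} {F : Type w}
    [NormedAddCommGroup E] [NormedSpace ℂ E] [NormedAddCommGroup F] [NormedSpace ℂ F]
    (π : lp (fun _ : I => E) ∞ →ₗ[ℂ] F) : Prop :=
  Function.Surjective π ∧
    ∀ x : lp (fun _ : I => E) ∞, Tendsto (fun i => ‖x i‖) (𝒰 : Filter I) (nhds ‖π x‖)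

/-- `π` realises `B` as the ultrapower `(A)_𝒰` of the Banach algebra `A` along `𝒰`:
in addition to being a Banach space ultrapower, `π` respects the coordinatewise
product on `ℓ^∞(A,I)`. -/
def IsUltrapowerAlg {I : Type u} (𝒰 : Ultrafilter I) {A : Type v} {B : Type w}
    [NonUnitalNormedRing A] [NormedSpace ℂ A] [IsScalarTower ℂ A A] [SMulCommClass ℂ A A]
    [NonUnitalNormedRing B] [NormedSpace ℂ B]
    (π : lp (fun _ : I => A) ∞ →ₗ[ℂ] B) : Prop :=
  IsUltrapower 𝒰 π ∧ ∀ x y : lp (fun _ : I => A) ∞, π (x * y) = π x * π y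

/-- Let `𝒜` be a Banach algebra and `𝒰` an ultrafilter on an index
set `I`.  The ultrapower `(𝒜)_𝒰` has an identity element if and only if `𝒜` has an
identity element. -/
theorem ultrapower_unital_iff_unital
    {I : Type u} {A : Type v} {B : Type w}
    [NonUnitalNormedRing A] [NormedSpace ℂ A] [IsScalarTower ℂ A A] [SMulCommClass ℂ A A]
    [CompleteSpace A]
    [NonUnitalNormedRing B] [NormedSpace ℂ B] [IsScalarTower ℂ B B] [SMulCommClass ℂ B B]
    [CompleteSpace B]
    (𝒰 : Ultrafilter I) (π : lp (fun _ : I => A) ∞ →ₗ[ℂ] B)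
    (hπ : IsUltrapowerAlg 𝒰 π) :
    (∃ e : B, ∀ b : B, e * b = b ∧ b * e = b) ↔ (∃ e : A, ∀ a : A, e * a = a ∧ a * e = a) := by
  obtain ⟨⟨hsurj, hnorm⟩, hmul⟩ := hπ
  constructor
  · -- B unital → A unital
    rintro ⟨e, he⟩
    obtain ⟨u, hu⟩ := hsurj e
    -- key claim: almost-identities in A
    have key : ∀ n : ℕ, ∃ i : I, ∀ a : A,
        ‖u i * a - a‖ ≤ ‖a‖ / (n + 1) ∧ ‖a * u i - a‖ ≤ ‖a‖ / (n + 1) := by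
      intro n
      by_contra hcon
      push_neg at hcon
      have hpos : (0 : ℝ) < 1 / (n + 1) := by positivity
      -- choose bad elements and normalize
      have hbad : ∀ i : I, ∃ b : A, ‖b‖ = 1 ∧
          ¬(‖u i * b - b‖ ≤ 1 / (n + 1) ∧ ‖b * u i - b‖ ≤ 1 / (n + 1)) := by
        intro i
        obtain ⟨a, ha⟩ := hcon i
        have ha0 : a ≠ 0 := by
          rintro rfl
          have := ha (by simp)
          simp at this
        have hna : (0 : ℝ) < ‖a‖ := norm_pos_iff.2 ha0
        refine ⟨‖a‖⁻¹ • a, by simp [norm_smul, hna.ne'], ?_⟩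
        rintro ⟨h1, h2⟩
        have e1 : u i * (‖a‖⁻¹ • a) - ‖a‖⁻¹ • a = ‖a‖⁻¹ • (u i * a - a) := by
          rw [mul_smul_comm, smul_sub]
        have e2 : (‖a‖⁻¹ • a) * u i - ‖a‖⁻¹ • a = ‖a‖⁻¹ • (a * u i - a) := by
          rw [smul_mul_assoc, smul_sub]
        rw [e1, norm_smul, norm_inv, norm_norm] at h1
        rw [e2, norm_smul, norm_inv, norm_norm] at h2
        have h1' : ‖u i * a - a‖ ≤ ‖a‖ / (n + 1) := by
          rw [div_eq_mul_one_div]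
          calc ‖u i * a - a‖ = ‖a‖ * (‖a‖⁻¹ * ‖u i * a - a‖) := by
                field_simp
            _ ≤ ‖a‖ * (1 / (n + 1)) := by
                exact mul_le_mul_of_nonneg_left h1 (norm_nonneg a)
        have h2' : ‖a * u i - a‖ ≤ ‖a‖ / (n + 1) := by
          rw [div_eq_mul_one_div]
          calc ‖a * u i - a‖ = ‖a‖ * (‖a‖⁻¹ * ‖a * u i - a‖) := by
                field_simp
            _ ≤ ‖a‖ * (1 / (n + 1)) := by
                exact mul_le_mul_of_nonneg_left h2 (norm_nonneg a)
        exact absurd h2' (not_le.2 (ha h1'))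
      choose b hb1 hb2 using hbad
      have hmem : Memℓp b ∞ := by
        apply memℓp_infty
        refine ⟨1, ?_⟩
        rintro r ⟨i, rfl⟩
        simp [hb1 i]
      set X : lp (fun _ : I => A) ∞ := ⟨b, hmem⟩ with hX
      have hXi : ∀ i, X i = b i := fun i => rfl
      have hpuX : π (u * X - X) = 0 := by
        rw [map_sub, hmul, hu, (he (π X)).1, sub_self]
      have hpXu : π (X * u - X) = 0 := by
        rw [map_sub, hmul, hu, (he (π X)).2, sub_self]
      have ht1 : Tendsto (fun i => ‖(u * X - X) i‖) (𝒰 : Filter I) (nhds 0) := by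
        have := hnorm (u * X - X); rwa [hpuX, norm_zero] at this
      have ht2 : Tendsto (fun i => ‖(X * u - X) i‖) (𝒰 : Filter I) (nhds 0) := by
        have := hnorm (X * u - X); rwa [hpXu, norm_zero] at this
      have hc1 : ∀ᶠ i in (𝒰 : Filter I), ‖(u * X - X) i‖ < 1 / (n + 1) :=
        ht1.eventually_lt_const hpos
      have hc2 : ∀ᶠ i in (𝒰 : Filter I), ‖(X * u - X) i‖ < 1 / (n + 1) :=
        ht2.eventually_lt_const hpos
      obtain ⟨i, h1, h2⟩ := (hc1.and hc2).exists
      have hco1 : (u * X - X) i = u i * b i - b i := by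
        rw [lp.coeFn_sub]
        simp only [Pi.sub_apply]
        rw [lp.infty_coeFn_mul]
        rfl
      have hco2 : (X * u - X) i = b i * u i - b i := by
        rw [lp.coeFn_sub]
        simp only [Pi.sub_apply]
        rw [lp.infty_coeFn_mul]
        rfl
      rw [hco1] at h1
      rw [hco2] at h2
      exact hb2 i ⟨h1.le, h2.le⟩
    -- extract a Cauchy sequence of almost identities
    set v : ℕ → A := fun n => u (key n).choose with hv
    have hvp : ∀ n : ℕ, ∀ a : A,
        ‖v n * a - a‖ ≤ ‖a‖ / (n + 1) ∧ ‖a * v n - a‖ ≤ ‖a‖ / (n + 1) :=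
      fun n => (key n).choose_spec
    have hvb : ∀ n, ‖v n‖ ≤ ‖u‖ := fun n =>
      lp.norm_apply_le_norm ENNReal.top_ne_zero u _
    have hcauchy : CauchySeq v := by
      refine cauchySeq_of_le_tendsto_0 (fun N => 2 * ‖u‖ / (N + 1)) ?_ ?_
      · intro m k N hm hk
        rw [dist_eq_norm]
        have key1 : ‖v m * v k - v k‖ ≤ ‖u‖ / (N + 1) := by
          refine le_trans (hvp m (v k)).1 ?_
          refine div_le_div₀ (norm_nonneg _) (hvb k) (by positivity) ?_
          have : (N : ℝ) ≤ m := Nat.cast_le.2 hm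
          linarith
        have key2 : ‖v m * v k - v m‖ ≤ ‖u‖ / (N + 1) := by
          refine le_trans (hvp k (v m)).2 ?_
          refine div_le_div₀ (norm_nonneg _) (hvb m) (by positivity) ?_
          have : (N : ℝ) ≤ k := Nat.cast_le.2 hk
          linarith
        calc ‖v m - v k‖ = ‖(v m - v m * v k) + (v m * v k - v k)‖ := by rw [sub_add_sub_cancel]
          _ ≤ ‖v m - v m * v k‖ + ‖v m * v k - v k‖ := norm_add_le _ _
          _ = ‖v m * v k - v m‖ + ‖v m * v k - v k‖ := by rw [norm_sub_rev]
          _ ≤ ‖u‖ / (N + 1) + ‖u‖ / (N + 1) := add_le_add key2 key1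
          _ = 2 * ‖u‖ / (N + 1) := by ring
      · have := tendsto_one_div_add_atTop_nhds_zero_nat.const_mul (2 * ‖u‖)
        simpa [mul_one_div, div_eq_mul_inv] using this
    obtain ⟨w, hw⟩ := cauchySeq_tendsto_of_complete hcauchy
    refine ⟨w, fun a => ?_⟩
    have hbound : Tendsto (fun n : ℕ => ‖a‖ / (n + 1)) atTop (nhds 0) := by
      have := tendsto_one_div_add_atTop_nhds_zero_nat.const_mul ‖a‖
      simpa [mul_one_div, div_eq_mul_inv] using this
    constructor
    · have h1 : Tendsto (fun n => v n * a) atTop (nhds (w * a)) :=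
        hw.mul tendsto_const_nhds
      have h2 : Tendsto (fun n => v n * a) atTop (nhds a) := by
        rw [tendsto_iff_norm_sub_tendsto_zero]
        exact squeeze_zero (fun n => norm_nonneg _) (fun n => (hvp n a).1) hbound
      exact tendsto_nhds_unique h1 h2
    · have h1 : Tendsto (fun n => a * v n) atTop (nhds (a * w)) :=
        tendsto_const_nhds.mul hw
      have h2 : Tendsto (fun n => a * v n) atTop (nhds a) := by
        rw [tendsto_iff_norm_sub_tendsto_zero]
        exact squeeze_zero (fun n => norm_nonneg _) (fun n => (hvp n a).2) hbound
      exact tendsto_nhds_unique h1 h2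
  · -- A unital → B unital
    rintro ⟨e, he⟩
    have hmem : Memℓp (fun _ : I => e) ∞ := by
      apply memℓp_infty
      refine ⟨‖e‖, ?_⟩
      rintro r ⟨i, rfl⟩
      exact le_refl _
    set E : lp (fun _ : I => A) ∞ := ⟨fun _ => e, hmem⟩ with hE
    refine ⟨π E, fun b => ?_⟩
    obtain ⟨x, rfl⟩ := hsurj b
    constructor
    · rw [← hmul]
      congr 1
      apply lp.ext
      rw [lp.infty_coeFn_mul]
      funext i
      exact (he (x i)).1
    · rw [← hmul]
      congr 1
      apply lp.ext
      rw [lp.infty_coeFn_mul]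
      funext i
      exact (he (x i)).2


end UPaper
end
end

section
/- Let 𝒜 be a Banach algebra and 𝒰 an ultrafilter on an index set I. The ultrapower (𝒜)_𝒰 has a bounded approximate identity if and only if 𝒜 has a bounded approximate identity; the same statement holds for bounded left approximate identities and for bounded right approximate identities. -/
set_option maxSynthPendingDepth 3
set_option maxHeartbeats 1000000
set_option synthInstance.maxHeartbeats 1000000

noncomputable section

open Filter Metric Topology ContinuousLinearMap
open scoped ENNReal

universe u v w y

namespace UPaper

/-- `A` has a bounded left approximate identity: a norm-bounded net `(e_d)` over a
directed preorder such that `‖a − e_d a‖ → 0` for every `a ∈ A`. -/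
def HasLeftBAI (A : Type u) [NonUnitalNormedRing A] : Prop :=
  ∃ (D : Type u) (r : D → D → Prop) (e : D → A),
    Nonempty D ∧ (∀ d, r d d) ∧ (∀ d₁ d₂ d₃, r d₁ d₂ → r d₂ d₃ → r d₁ d₃) ∧
    (∀ d₁ d₂, ∃ d₃, r d₁ d₃ ∧ r d₂ d₃) ∧
    (∃ M : ℝ, ∀ d, ‖e d‖ ≤ M) ∧
    ∀ a : A, ∀ ε > (0 : ℝ), ∃ d₀, ∀ d, r d₀ d → ‖a - e d * a‖ < ε

/-- `A` has a bounded right approximate identity. -/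
def HasRightBAI (A : Type u) [NonUnitalNormedRing A] : Prop :=
  ∃ (D : Type u) (r : D → D → Prop) (e : D → A),
    Nonempty D ∧ (∀ d, r d d) ∧ (∀ d₁ d₂ d₃, r d₁ d₂ → r d₂ d₃ → r d₁ d₃) ∧
    (∀ d₁ d₂, ∃ d₃, r d₁ d₃ ∧ r d₂ d₃) ∧
    (∃ M : ℝ, ∀ d, ‖e d‖ ≤ M) ∧
    ∀ a : A, ∀ ε > (0 : ℝ), ∃ d₀, ∀ d, r d₀ d → ‖a - a * e d‖ < ε

/-- `A` has a (two-sided) bounded approximate identity: a norm-bounded net `(e_d)` over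
a directed preorder such that `‖a − e_d a‖ → 0` and `‖a − a e_d‖ → 0` for every `a ∈ A`. -/
def HasBAI (A : Type u) [NonUnitalNormedRing A] : Prop :=
  ∃ (D : Type u) (r : D → D → Prop) (e : D → A),
    Nonempty D ∧ (∀ d, r d d) ∧ (∀ d₁ d₂ d₃, r d₁ d₂ → r d₂ d₃ → r d₁ d₃) ∧
    (∀ d₁ d₂, ∃ d₃, r d₁ d₃ ∧ r d₂ d₃) ∧
    (∃ M : ℝ, ∀ d, ‖e d‖ ≤ M) ∧
    ∀ a : A, ∀ ε > (0 : ℝ), ∃ d₀, ∀ d, r d₀ d → ‖a - e d * a‖ < ε ∧ ‖a - a * e d‖ < ε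

/-- A generic "bounded approximate identity"-type property, with the approximation
requirement expressed by an abstract error functional `g`. -/
def GenBAI (C : Type y) [NonUnitalNormedRing C] (g : C → C → ℝ) : Prop :=
  ∃ (D : Type y) (r : D → D → Prop) (e : D → C),
    Nonempty D ∧ (∀ d, r d d) ∧ (∀ d₁ d₂ d₃, r d₁ d₂ → r d₂ d₃ → r d₁ d₃) ∧
    (∀ d₁ d₂, ∃ d₃, r d₁ d₃ ∧ r d₂ d₃) ∧
    (∃ M : ℝ, ∀ d, ‖e d‖ ≤ M) ∧
    ∀ a : C, ∀ ε > (0 : ℝ), ∃ d₀, ∀ d, r d₀ d → g a (e d) < ε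

/-- The finite-set criterion for a bounded approximate identity. -/
def FinCrit (C : Type y) [NonUnitalNormedRing C] (g : C → C → ℝ) : Prop :=
  ∃ M : ℝ, ∀ s : Finset C, ∀ ε > (0 : ℝ), ∃ e : C, ‖e‖ ≤ M ∧ ∀ a ∈ s, g a e < ε

lemma finCrit_of_genBAI {C : Type y} [NonUnitalNormedRing C] {g : C → C → ℝ}
    (h : GenBAI C g) : FinCrit C g := by
  obtain ⟨D, r, e, hne, hrefl, htrans, hdir, ⟨M, hM⟩, happ⟩ := h
  refine ⟨M, fun s ε hε => ?_⟩
  have key : ∃ d, ∀ a ∈ s, ∀ d', r d d' → g a (e d') < ε := by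
    classical
    induction s using Finset.induction_on with
    | empty => exact ⟨hne.some, by simp⟩
    | @insert a s ha ih =>
      obtain ⟨d₁, h₁⟩ := ih
      obtain ⟨d₂, h₂⟩ := happ a ε hε
      obtain ⟨d₃, h₃₁, h₃₂⟩ := hdir d₁ d₂
      refine ⟨d₃, fun a' ha' d' hd' => ?_⟩
      rcases Finset.mem_insert.1 ha' with rfl | ha'
      · exact h₂ d' (htrans _ _ _ h₃₂ hd')
      · exact h₁ a' ha' d' (htrans _ _ _ h₃₁ hd')
  obtain ⟨d, hd⟩ := key
  exact ⟨e d, hM d, fun a ha => hd a ha d (hrefl d)⟩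

lemma genBAI_of_finCrit {C : Type y} [NonUnitalNormedRing C] {g : C → C → ℝ}
    (h : FinCrit C g) : GenBAI C g := by
  classical
  obtain ⟨M, hM⟩ := h
  have hpos : ∀ n : ℕ, (0 : ℝ) < 1 / (n + 1) := fun n => by positivity
  refine ⟨Finset C × ℕ, fun d d' => d.1 ⊆ d'.1 ∧ d.2 ≤ d'.2,
    fun d => (hM d.1 (1 / (d.2 + 1)) (hpos d.2)).choose,
    ⟨⟨∅, 0⟩⟩, fun d => ⟨subset_rfl, le_rfl⟩,
    fun d₁ d₂ d₃ h₁ h₂ => ⟨h₁.1.trans h₂.1, h₁.2.trans h₂.2⟩,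
    fun d₁ d₂ => ⟨⟨d₁.1 ∪ d₂.1, max d₁.2 d₂.2⟩,
      ⟨Finset.subset_union_left, le_max_left _ _⟩,
      ⟨Finset.subset_union_right, le_max_right _ _⟩⟩,
    ⟨M, fun d => (hM d.1 (1 / (d.2 + 1)) (hpos d.2)).choose_spec.1⟩,
    fun a ε hε => ?_⟩
  obtain ⟨n, hn⟩ := exists_nat_one_div_lt hε
  refine ⟨⟨{a}, n⟩, fun d hd => ?_⟩
  have h1 : g a ((hM d.1 (1 / (d.2 + 1)) (hpos d.2)).choose) < 1 / (d.2 + 1) :=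
    (hM d.1 (1 / (d.2 + 1)) (hpos d.2)).choose_spec.2 a
      (hd.1 (Finset.mem_singleton_self a))
  have h2 : (1 : ℝ) / (d.2 + 1) ≤ 1 / (n + 1) := by
    apply one_div_le_one_div_of_le (by positivity)
    exact_mod_cast (add_le_add_iff_right (1 : ℝ)).2 (Nat.cast_le.2 hd.2)
  exact (h1.trans_le h2).trans hn

lemma hasBAI_iff_genBAI (C : Type y) [NonUnitalNormedRing C] :
    HasBAI C ↔ GenBAI C (fun a e => max ‖a - e * a‖ ‖a - a * e‖) := by
  unfold HasBAI GenBAI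
  simp only [max_lt_iff]

lemma finCrit_transfer {I : Type u} {A : Type v} {B : Type w}
    [NonUnitalNormedRing A] [NormedSpace ℂ A] [IsScalarTower ℂ A A] [SMulCommClass ℂ A A]
    [NonUnitalNormedRing B] [NormedSpace ℂ B]
    (𝒰 : Ultrafilter I) (π : lp (fun _ : I => A) ∞ →ₗ[ℂ] B)
    (hsurj : Function.Surjective π)
    (hnorm : ∀ x : lp (fun _ : I => A) ∞,
      Tendsto (fun i => ‖x i‖) (𝒰 : Filter I) (nhds ‖π x‖))
    (gA : A → A → ℝ) (gB : B → B → ℝ)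
    (hg : ∀ x y : lp (fun _ : I => A) ∞,
      Tendsto (fun i => gA (x i) (y i)) (𝒰 : Filter I) (nhds (gB (π x) (π y)))) :
    FinCrit B gB ↔ FinCrit A gA := by
  classical
  let const : A → lp (fun _ : I => A) ∞ := fun a =>
    ⟨fun _ => a, memℓp_infty ⟨‖a‖, by rintro - ⟨i, rfl⟩; simp⟩⟩
  constructor
  · rintro ⟨M, hM⟩
    refine ⟨M + 1, fun s ε hε => ?_⟩
    obtain ⟨f, hfM, hferr⟩ :=
      hM (s.image fun a => π (const a)) (ε / 2) (half_pos hε)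
    obtain ⟨x, hx⟩ := hsurj f
    have hev : ∀ᶠ i in (𝒰 : Filter I), ‖x i‖ ≤ M + 1 ∧ ∀ a ∈ s, gA a (x i) < ε := by
      refine Filter.Eventually.and ?_ (s.eventually_all.2 fun a ha => ?_)
      · have := hnorm x
        rw [hx] at this
        exact (this.eventually_le_const (by linarith)).mono fun i hi => hi
      · have ht := hg (const a) x
        rw [hx] at ht
        have hlt : gB (π (const a)) f < ε :=
          lt_of_lt_of_le (hferr _ (Finset.mem_image_of_mem _ ha)) (by linarith)
        exact (ht.eventually_lt_const hlt : ∀ᶠ i in (𝒰 : Filter I), gA ((const a) i) (x i) < ε)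
    obtain ⟨i, hi⟩ := hev.exists
    exact ⟨x i, hi.1, hi.2⟩
  · rintro ⟨M, hM⟩
    refine ⟨M, fun s ε hε => ?_⟩
    choose rep hrep using hsurj
    have hcoord : ∀ i : I, ∃ e : A, ‖e‖ ≤ M ∧ ∀ b ∈ s, gA (rep b i) e < ε / 2 := by
      intro i
      obtain ⟨e, he1, he2⟩ :=
        hM (s.image fun b => rep b i) (ε / 2) (half_pos hε)
      exact ⟨e, he1, fun b hb => he2 _ (Finset.mem_image_of_mem _ hb)⟩
    choose eF heF1 heF2 using hcoord
    set E : lp (fun _ : I => A) ∞ :=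
      ⟨eF, memℓp_infty ⟨M, by rintro - ⟨i, rfl⟩; exact heF1 i⟩⟩ with hE
    refine ⟨π E, ?_, fun b hb => ?_⟩
    · exact le_of_tendsto (hnorm E) (Eventually.of_forall fun i => heF1 i)
    · have ht := hg (rep b) E
      rw [hrep b] at ht
      have : gB b (π E) ≤ ε / 2 :=
        le_of_tendsto ht (Eventually.of_forall fun i => (heF2 i b hb).le)
      linarith

/-- Let `𝒜` be a Banach algebra and `𝒰` an ultrafilter on an index set
`I`.  The ultrapower `(𝒜)_𝒰` has a bounded approximate identity if and only if `𝒜` does;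
the same holds for bounded left approximate identities and bounded right approximate
identities. -/
theorem ultrapower_bai_iff_bai
    {I : Type u} {A : Type v} {B : Type w}
    [NonUnitalNormedRing A] [NormedSpace ℂ A] [IsScalarTower ℂ A A] [SMulCommClass ℂ A A]
    [CompleteSpace A]
    [NonUnitalNormedRing B] [NormedSpace ℂ B] [IsScalarTower ℂ B B] [SMulCommClass ℂ B B]
    [CompleteSpace B]
    (𝒰 : Ultrafilter I) (π : lp (fun _ : I => A) ∞ →ₗ[ℂ] B)
    (hπ : IsUltrapowerAlg 𝒰 π) :
    (HasBAI B ↔ HasBAI A) ∧ (HasLeftBAI B ↔ HasLeftBAI A) ∧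
      (HasRightBAI B ↔ HasRightBAI A) := by
  obtain ⟨⟨hsurj, hnorm⟩, hmul⟩ := hπ
  have hgL : ∀ x y : lp (fun _ : I => A) ∞,
      Tendsto (fun i => ‖x i - y i * x i‖) (𝒰 : Filter I) (nhds ‖π x - π y * π x‖) := by
    intro x y
    have hcoe : (fun i => ‖x i - y i * x i‖) = fun i => ‖(x - y * x) i‖ := by
      funext i
      simp [lp.coeFn_sub, lp.infty_coeFn_mul, Pi.sub_apply, Pi.mul_apply]
      rfl
    rw [hcoe]
    have h := hnorm (x - y * x)
    rwa [map_sub, hmul] at h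
  have hgR : ∀ x y : lp (fun _ : I => A) ∞,
      Tendsto (fun i => ‖x i - x i * y i‖) (𝒰 : Filter I) (nhds ‖π x - π x * π y‖) := by
    intro x y
    have hcoe : (fun i => ‖x i - x i * y i‖) = fun i => ‖(x - x * y) i‖ := by
      funext i
      simp [lp.coeFn_sub, lp.infty_coeFn_mul, Pi.sub_apply, Pi.mul_apply]
      rfl
    rw [hcoe]
    have h := hnorm (x - x * y)
    rwa [map_sub, hmul] at h
  have hL : HasLeftBAI B ↔ HasLeftBAI A := by
    have h1 : HasLeftBAI B ↔ GenBAI B (fun a e => ‖a - e * a‖) := Iff.rfl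
    have h2 : HasLeftBAI A ↔ GenBAI A (fun a e => ‖a - e * a‖) := Iff.rfl
    rw [h1, h2]
    have ht := finCrit_transfer 𝒰 π hsurj hnorm (fun a e => ‖a - e * a‖)
      (fun a e => ‖a - e * a‖) (fun x y => hgL x y)
    exact ⟨fun h => genBAI_of_finCrit (ht.1 (finCrit_of_genBAI h)),
      fun h => genBAI_of_finCrit (ht.2 (finCrit_of_genBAI h))⟩
  have hR : HasRightBAI B ↔ HasRightBAI A := by
    have h1 : HasRightBAI B ↔ GenBAI B (fun a e => ‖a - a * e‖) := Iff.rfl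
    have h2 : HasRightBAI A ↔ GenBAI A (fun a e => ‖a - a * e‖) := Iff.rfl
    rw [h1, h2]
    have ht := finCrit_transfer 𝒰 π hsurj hnorm (fun a e => ‖a - a * e‖)
      (fun a e => ‖a - a * e‖) (fun x y => hgR x y)
    exact ⟨fun h => genBAI_of_finCrit (ht.1 (finCrit_of_genBAI h)),
      fun h => genBAI_of_finCrit (ht.2 (finCrit_of_genBAI h))⟩
  have hB : HasBAI B ↔ HasBAI A := by
    rw [hasBAI_iff_genBAI B, hasBAI_iff_genBAI A]
    have ht := finCrit_transfer 𝒰 π hsurj hnorm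
      (fun a e => max ‖a - e * a‖ ‖a - a * e‖)
      (fun a e => max ‖a - e * a‖ ‖a - a * e‖)
      (fun x y => (hgL x y).max (hgR x y))
    exact ⟨fun h => genBAI_of_finCrit (ht.1 (finCrit_of_genBAI h)),
      fun h => genBAI_of_finCrit (ht.2 (finCrit_of_genBAI h))⟩
  exact ⟨hB, hL, hR⟩

end UPaper
end
end

section
/- Let H and K be infinite-dimensional Hilbert spaces and let 𝒰 be a countably incomplete ultrafilter on an index set I. Then the canonical map ψ₀ : (H)_𝒰 ⊗̂ (K)_𝒰 → (H ⊗̂ K)_𝒰 does not have dense range; indeed there exists τ ∈ (H ⊗̂ K)_𝒰 with ‖τ‖ = 1 whose distance from the image of ψ₀ is 1. -/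
set_option maxSynthPendingDepth 3
set_option maxHeartbeats 1000000
set_option synthInstance.maxHeartbeats 1000000

noncomputable section

open Filter Metric Topology ContinuousLinearMap
open scoped ENNReal

universe u v w y

namespace UPaper

/-- `t` realises `P` as the projective tensor product `E ⊗̂ F` of the Banach spaces `E`
and `F`: `t` is bilinear with `‖t x y‖ ≤ ‖x‖·‖y‖`, the elementary tensors span a dense
subspace of `P`, and every bounded bilinear map from `E × F` into a Banach space factors
through `t` with no increase of norm.  These properties determine `(P, t)` up to
isometric isomorphism, and give `P` the projective norm
`‖τ‖_π = inf {Σ ‖x_k‖‖y_k‖ : τ = Σ x_k ⊗ y_k}`. -/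
structure IsProjTensor (E : Type u) (F : Type v) (P : Type w)
    [NormedAddCommGroup E] [NormedSpace ℂ E] [NormedAddCommGroup F] [NormedSpace ℂ F]
    [NormedAddCommGroup P] [NormedSpace ℂ P] [CompleteSpace P]
    (t : E →L[ℂ] F →L[ℂ] P) : Prop where
  norm_le : ∀ x y, ‖t x y‖ ≤ ‖x‖ * ‖y‖
  dense_span : Dense ((Submodule.span ℂ {p : P | ∃ x y, t x y = p} : Submodule ℂ P) : Set P)
  lift : ∀ (G : Type y) [NormedAddCommGroup G] [NormedSpace ℂ G] [CompleteSpace G]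
    (b : E →L[ℂ] F →L[ℂ] G), ∃ B : P →L[ℂ] G, ‖B‖ ≤ ‖b‖ ∧ ∀ x y, B (t x y) = b x y

/-- `ψ` is the canonical map `ψ₀ : (E)_𝒰 ⊗̂ (F)_𝒰 → (E ⊗̂ F)_𝒰`, determined on
elementary tensors by `ψ₀((x_i) ⊗ (y_i)) = (x_i ⊗ y_i)`.  Here `πE`, `πF`, `πT` realise
the ultrapowers of `E`, `F` and of `T = E ⊗̂ F` (the latter with tensor map `t`), and
`tU` realises `PU = (E)_𝒰 ⊗̂ (F)_𝒰`. -/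
def IsUltraTensorMap {I : Type u} (𝒰 : Ultrafilter I)
    {E F T EU FU PU TU : Type*}
    [NormedAddCommGroup E] [NormedSpace ℂ E] [NormedAddCommGroup F] [NormedSpace ℂ F]
    [NormedAddCommGroup T] [NormedSpace ℂ T] [CompleteSpace T]
    [NormedAddCommGroup EU] [NormedSpace ℂ EU] [NormedAddCommGroup FU] [NormedSpace ℂ FU]
    [NormedAddCommGroup PU] [NormedSpace ℂ PU] [CompleteSpace PU]
    [NormedAddCommGroup TU] [NormedSpace ℂ TU]
    (πE : lp (fun _ : I => E) ∞ →ₗ[ℂ] EU) (πF : lp (fun _ : I => F) ∞ →ₗ[ℂ] FU)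
    (πT : lp (fun _ : I => T) ∞ →ₗ[ℂ] TU)
    (t : E →L[ℂ] F →L[ℂ] T) (tU : EU →L[ℂ] FU →L[ℂ] PU)
    (ψ : PU →L[ℂ] TU) : Prop :=
  ∀ (x : lp (fun _ : I => E) ∞) (y : lp (fun _ : I => F) ∞) (z : lp (fun _ : I => T) ∞),
    (∀ i, z i = t (x i) (y i)) → ψ (tU (πE x) (πF y)) = πT z


section Aux

open Finset
open scoped ComplexConjugate InnerProductSpace

theorem aux_exists_on_seq {H : Type*} [NormedAddCommGroup H] [InnerProductSpace ℂ H]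
    [CompleteSpace H] (hH : ¬ FiniteDimensional ℂ H) : ∃ e : ℕ → H, Orthonormal ℂ e := by
  obtain ⟨w, b, hb⟩ := exists_hilbertBasis ℂ H
  have hwinf : w.Infinite := by
    intro hfin
    apply hH
    haveI : FiniteDimensional ℂ (Submodule.span ℂ w) :=
      FiniteDimensional.span_of_finite ℂ hfin
    have hclosed : IsClosed ((Submodule.span ℂ w : Submodule ℂ H) : Set H) :=
      Submodule.closed_of_finiteDimensional _
    have hd := b.dense_span
    rw [hb, Subtype.range_coe] at hd
    have heq : (Submodule.span ℂ w).topologicalClosure = Submodule.span ℂ w :=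
      IsClosed.submodule_topologicalClosure_eq hclosed
    rw [heq] at hd
    rw [hd] at this
    exact Submodule.topEquiv.finiteDimensional
  let g := hwinf.natEmbedding
  refine ⟨fun n => (g n : H), ?_⟩
  have hon := b.orthonormal
  rw [hb] at hon
  exact hon.comp g g.injective

theorem aux_core_ineq {H : Type*} [NormedAddCommGroup H] [InnerProductSpace ℂ H]
    [CompleteSpace H] {K : Type*} [NormedAddCommGroup K] [InnerProductSpace ℂ K]
    [CompleteSpace K] {T : Type*} [NormedAddCommGroup T] [NormedSpace ℂ T] [CompleteSpace T]
    {t : H →L[ℂ] K →L[ℂ] T} (ht : IsProjTensor.{_,_,_,y} H K T t)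
    {e : ℕ → H} {f : ℕ → K} (he : Orthonormal ℂ e) (hf : Orthonormal ℂ f)
    (n : ℕ) (hn : 0 < n) (L : List (H × K)) :
    1 - (L.length : ℝ) / n ≤
      ‖(n : ℂ)⁻¹ • (∑ k ∈ Finset.range n, t (e k) (f k)) -
        (L.map fun q => t q.1 q.2).sum‖ := by

  classical
  set r := L.length with hr
  -- the span of the left entries
  set V : Submodule ℂ H := Submodule.span ℂ ((L.map Prod.fst).toFinset : Set H) with hV
  haveI hVfin : FiniteDimensional ℂ V :=
    FiniteDimensional.span_of_finite ℂ (List.toFinset _).finite_toSet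
  -- the orthogonal projection onto V, as a map H →L H
  set P : H →L[ℂ] H := V.subtypeL.comp (V.orthogonalProjectionOnto) with hPdef
  have hPmem : ∀ u : H, P u ∈ V := fun u => (V.orthogonalProjectionOnto u).2
  have hPval : ∀ u ∈ V, P u = u := fun u hu => (Submodule.starProjection_eq_self_iff (K := V)).2 hu
  have hsub : ∀ u : H, u - P u ∈ Vᗮ := fun u => Submodule.sub_starProjection_mem_orthogonal (K := V) u
  set Q : H →L[ℂ] H := ContinuousLinearMap.id ℂ H - P with hQdef
  have hQ : ∀ u : H, Q u = u - P u := fun u => rfl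
  have hQnorm : ∀ u : H, ‖Q u‖ ≤ ‖u‖ := by
    intro u
    have horth : ⟪P u, u - P u⟫_ℂ = 0 :=
      Submodule.inner_right_of_mem_orthogonal (hPmem u) (hsub u)
    have hpyth : ‖u‖ ^ 2 = ‖P u‖ ^ 2 + ‖u - P u‖ ^ 2 := by
      have hns := norm_add_sq (𝕜 := ℂ) (P u) (u - P u)
      simp only [horth, map_zero, mul_zero, add_zero, zero_mul] at hns
      simpa [add_sub_cancel] using hns
    rw [hQ]
    nlinarith [norm_nonneg (P u), norm_nonneg (u - P u), norm_nonneg u]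
  -- the bilinear functional
  set B : H →L[ℂ] K →L[ℂ] ℂ :=
    ∑ k ∈ Finset.range n, ((innerSL ℂ (e k)).comp Q).smulRight (innerSL ℂ (f k)) with hBdef
  have hBapply : ∀ u v, B u v = ∑ k ∈ Finset.range n, ⟪e k, Q u⟫_ℂ * ⟪f k, v⟫_ℂ := by
    intro u v
    simp [hBdef, ContinuousLinearMap.sum_apply, smul_eq_mul]
  have hBnorm : ∀ u v, ‖B u v‖ ≤ ‖u‖ * ‖v‖ := by
    intro u v
    rw [hBapply]
    calc ‖∑ k ∈ Finset.range n, ⟪e k, Q u⟫_ℂ * ⟪f k, v⟫_ℂ‖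
        ≤ ∑ k ∈ Finset.range n, ‖⟪e k, Q u⟫_ℂ‖ * ‖⟪f k, v⟫_ℂ‖ := by
          refine (norm_sum_le _ _).trans ?_
          exact Finset.sum_le_sum fun k _ => (norm_mul _ _).le
      _ ≤ ‖u‖ * ‖v‖ := by
          have hcs := Finset.sum_mul_sq_le_sq_mul_sq (Finset.range n)
            (fun k => ‖⟪e k, Q u⟫_ℂ‖) (fun k => ‖⟪f k, v⟫_ℂ‖)
          have h1 : ∑ k ∈ Finset.range n, ‖⟪e k, Q u⟫_ℂ‖ ^ 2 ≤ ‖Q u‖ ^ 2 :=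
            he.sum_inner_products_le (Q u)
          have h2 : ∑ k ∈ Finset.range n, ‖⟪f k, v⟫_ℂ‖ ^ 2 ≤ ‖v‖ ^ 2 :=
            hf.sum_inner_products_le v
          have hS : 0 ≤ ∑ k ∈ Finset.range n, ‖⟪e k, Q u⟫_ℂ‖ * ‖⟪f k, v⟫_ℂ‖ :=
            Finset.sum_nonneg fun k _ => mul_nonneg (norm_nonneg _) (norm_nonneg _)
          have hQu := hQnorm u
          have h1' : ∑ k ∈ Finset.range n, ‖⟪e k, Q u⟫_ℂ‖ ^ 2 ≤ ‖u‖ ^ 2 :=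
            h1.trans (by nlinarith [norm_nonneg (Q u), norm_nonneg u])
          have hnn : 0 ≤ ∑ k ∈ Finset.range n, ‖⟪f k, v⟫_ℂ‖ ^ 2 :=
            Finset.sum_nonneg fun k _ => sq_nonneg _
          nlinarith [mul_nonneg (norm_nonneg u) (norm_nonneg v), sq_nonneg (‖u‖*‖v‖),
            mul_le_mul h1' h2 hnn (sq_nonneg ‖u‖)]
  -- lift through the projective tensor product, via `ULift` to fix universes
  set J : ℂ ≃ₗᵢ[ℂ] ULift.{y} ℂ := (LinearIsometryEquiv.ulift ℂ ℂ).symm with hJ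
  set Jc : ℂ →L[ℂ] ULift.{y} ℂ := J.toLinearIsometry.toContinuousLinearMap with hJc
  have hJcval : ∀ c : ℂ, (Jc c).down = c := fun c => rfl
  have hJcnorm : ∀ c : ℂ, ‖Jc c‖ = ‖c‖ := fun c => J.norm_map c
  set B' : H →L[ℂ] K →L[ℂ] ULift.{y} ℂ :=
    (ContinuousLinearMap.compL ℂ K ℂ (ULift.{y} ℂ) Jc).comp B with hB'def
  have hB'apply : ∀ u v, B' u v = Jc (B u v) := fun u v => rfl
  have hB'norm : ‖B'‖ ≤ 1 := by
    refine opNorm_le_bound _ zero_le_one fun u => opNorm_le_bound _ (by positivity) fun v => ?_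
    rw [hB'apply, hJcnorm, one_mul]
    exact hBnorm u v
  obtain ⟨Φ, hΦ1, hΦ2⟩ := ht.lift (ULift.{y} ℂ) B'
  have hΦnorm : ‖Φ‖ ≤ 1 := hΦ1.trans hB'norm
  -- `B` kills all elementary tensors from the list
  have hkill : ∀ q ∈ L, B q.1 = 0 := by
    intro q hq
    have hq1 : q.1 ∈ V := Submodule.subset_span (by
      simp only [List.coe_toFinset, Set.mem_setOf_eq, List.mem_map]
      exact ⟨q, hq, rfl⟩)
    have : Q q.1 = 0 := by rw [hQ, hPval _ hq1, sub_self]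
    ext v
    rw [hBapply]
    simp [this]
  -- value of `B` on the diagonal
  have hdiag : ∀ j ∈ Finset.range n, B (e j) (f j) = ⟪e j, Q (e j)⟫_ℂ := by
    intro j hj
    rw [hBapply]
    rw [Finset.sum_eq_single_of_mem j hj]
    · have h1 : ⟪f j, f j⟫_ℂ = 1 := by
        rw [inner_self_eq_norm_sq_to_K, hf.1 j]; norm_num
      rw [h1, mul_one]
    · intro k _ hkj
      rw [hf.2 hkj, mul_zero]
  -- value of `Φ` on the element in question
  set z : T := (n : ℂ)⁻¹ • (∑ k ∈ Finset.range n, t (e k) (f k)) -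
      (L.map fun q => t q.1 q.2).sum with hz
  have hΦz : Φ z = Jc ((n : ℂ)⁻¹ * ∑ j ∈ Finset.range n, ⟪e j, Q (e j)⟫_ℂ) := by
    rw [hz, map_sub, map_smul, map_sum]
    have hlist : Φ (L.map fun q => t q.1 q.2).sum = 0 := by
      rw [map_list_sum, List.map_map]
      refine List.sum_eq_zero fun x hx => ?_
      simp only [List.mem_map, Function.comp_apply] at hx
      obtain ⟨q, hq, rfl⟩ := hx
      rw [hΦ2, hB'apply, hkill q hq]
      simp
    rw [hlist, sub_zero]
    have hsum : ∀ j ∈ Finset.range n, Φ (t (e j) (f j)) = Jc ⟪e j, Q (e j)⟫_ℂ := by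
      intro j hj
      rw [hΦ2, hB'apply, hdiag j hj]
    rw [Finset.sum_congr rfl hsum, ← map_sum, ← map_smul]
    simp [smul_eq_mul]
  -- the inner products are real
  have hinner : ∀ j : ℕ, ⟪e j, Q (e j)⟫_ℂ = 1 - ((‖P (e j)‖ ^ 2 : ℝ) : ℂ) := by
    intro j
    rw [hQ, inner_sub_right]
    have h1 : ⟪e j, e j⟫_ℂ = 1 := by
      rw [inner_self_eq_norm_sq_to_K, he.1 j]; norm_num
    have h2 : ⟪e j, P (e j)⟫_ℂ = ((‖P (e j)‖ ^ 2 : ℝ) : ℂ) := by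
      have hdec : e j = P (e j) + (e j - P (e j)) := by abel
      calc ⟪e j, P (e j)⟫_ℂ
          = ⟪P (e j) + (e j - P (e j)), P (e j)⟫_ℂ := by rw [← hdec]
        _ = ⟪P (e j), P (e j)⟫_ℂ + ⟪e j - P (e j), P (e j)⟫_ℂ := inner_add_left _ _ _
        _ = ((‖P (e j)‖ ^ 2 : ℝ) : ℂ) := by
            rw [Submodule.inner_left_of_mem_orthogonal (hPmem (e j)) (hsub (e j)),
              add_zero, inner_self_eq_norm_sq_to_K]
            norm_cast
    rw [h1, h2]
  -- trace bound
  have htr : ∑ j ∈ Finset.range n, ‖P (e j)‖ ^ 2 ≤ (r : ℝ) := by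
    set d := Module.finrank ℂ V with hdd
    have hd : d ≤ r := by
      refine le_trans ?_ (le_trans (List.toFinset_card_le (L.map Prod.fst))
        (by simp [hr]))
      have := finrank_span_le_card (R := ℂ) (((L.map Prod.fst).toFinset : Finset H) : Set H)
      simpa using this
    set bV := stdOrthonormalBasis ℂ V with hbV
    have hPn : ∀ j : ℕ, ‖P (e j)‖ ^ 2 = ∑ m : Fin d, ‖⟪(bV m : H), e j⟫_ℂ‖ ^ 2 := by
      intro j
      have h1 : ‖P (e j)‖ = ‖V.orthogonalProjectionOnto (e j)‖ := rfl
      have h2 : ‖V.orthogonalProjectionOnto (e j)‖ = ‖bV.repr (V.orthogonalProjectionOnto (e j))‖ :=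
        (bV.repr.norm_map _).symm
      rw [h1, h2, EuclideanSpace.norm_eq, Real.sq_sqrt
        (Finset.sum_nonneg fun m _ => sq_nonneg _)]
      refine Finset.sum_congr rfl fun m _ => ?_
      rw [bV.repr_apply_apply, Submodule.inner_orthogonalProjectionOnto_eq_of_mem_left]
    calc ∑ j ∈ Finset.range n, ‖P (e j)‖ ^ 2
        = ∑ j ∈ Finset.range n, ∑ m : Fin d, ‖⟪(bV m : H), e j⟫_ℂ‖ ^ 2 :=
          Finset.sum_congr rfl fun j _ => hPn j
      _ = ∑ m : Fin d, ∑ j ∈ Finset.range n, ‖⟪(bV m : H), e j⟫_ℂ‖ ^ 2 := Finset.sum_comm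
      _ ≤ ∑ m : Fin d, (1 : ℝ) := by
          refine Finset.sum_le_sum fun m _ => ?_
          have hb : ∑ j ∈ Finset.range n, ‖⟪e j, (bV m : H)⟫_ℂ‖ ^ 2 ≤ ‖(bV m : H)‖ ^ 2 :=
            he.sum_inner_products_le _
          have hsymm : ∀ j, ‖⟪(bV m : H), e j⟫_ℂ‖ = ‖⟪e j, (bV m : H)⟫_ℂ‖ :=
            fun j => norm_inner_symm _ _
          have hb1 : ‖(bV m : H)‖ = 1 := by
            have := bV.orthonormal.1 m
            exact this
          calc ∑ j ∈ Finset.range n, ‖⟪(bV m : H), e j⟫_ℂ‖ ^ 2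
              = ∑ j ∈ Finset.range n, ‖⟪e j, (bV m : H)⟫_ℂ‖ ^ 2 := by
                refine Finset.sum_congr rfl fun j _ => by rw [hsymm]
            _ ≤ ‖(bV m : H)‖ ^ 2 := hb
            _ = 1 := by rw [hb1]; norm_num
      _ = (d : ℝ) := by simp
      _ ≤ (r : ℝ) := by exact_mod_cast hd
  -- put everything together
  set S : ℝ := ∑ j ∈ Finset.range n, ‖P (e j)‖ ^ 2 with hS
  have hc : ((n : ℂ)⁻¹ * ∑ j ∈ Finset.range n, ⟪e j, Q (e j)⟫_ℂ)
      = ((((n : ℝ) - S) / n : ℝ) : ℂ) := by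
    rw [Finset.sum_congr rfl fun j _ => hinner j, Finset.sum_sub_distrib]
    simp only [Finset.sum_const, Finset.card_range, nsmul_eq_mul, mul_one]
    rw [hS]
    push_cast
    field_simp
  have hΦznorm : ‖Φ z‖ = |((n : ℝ) - S) / n| := by
    rw [hΦz, hc, hJcnorm, Complex.norm_real, Real.norm_eq_abs]
  have hle1 : 1 - (r : ℝ) / n ≤ ((n : ℝ) - S) / n := by
    have hn' : (0 : ℝ) < n := by exact_mod_cast hn
    have heq : 1 - (r : ℝ) / n = ((n : ℝ) - r) / n := by field_simp
    rw [heq]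
    exact (div_le_div_iff_of_pos_right hn').mpr (by linarith)
  have hle2 : ((n : ℝ) - S) / n ≤ ‖Φ z‖ := by
    rw [hΦznorm]; exact le_abs_self _
  have hle3 : ‖Φ z‖ ≤ ‖z‖ := by
    calc ‖Φ z‖ ≤ ‖Φ‖ * ‖z‖ := Φ.le_opNorm z
      _ ≤ 1 * ‖z‖ := by
          exact mul_le_mul_of_nonneg_right hΦnorm (norm_nonneg z)
      _ = ‖z‖ := one_mul _
  exact le_trans (le_trans hle1 hle2) hle3

end Aux

/-- Let `H` and `K` be infinite-dimensional Hilbert spaces and `𝒰` a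
countably incomplete ultrafilter on `I`.  Then the canonical map
`ψ₀ : (H)_𝒰 ⊗̂ (K)_𝒰 → (H ⊗̂ K)_𝒰` does not have dense range; indeed there is a
`τ ∈ (H ⊗̂ K)_𝒰` of norm one whose distance to the image of `ψ₀` equals `1`. -/
theorem psi_not_denseRange_hilbert
    {I : Type u} (𝒰 : Ultrafilter I) (h𝒰 : CountablyIncomplete 𝒰)
    {H K T HU KU PU TU : Type*}
    [NormedAddCommGroup H] [InnerProductSpace ℂ H] [CompleteSpace H]
    [NormedAddCommGroup K] [InnerProductSpace ℂ K] [CompleteSpace K]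
    (hH : ¬ FiniteDimensional ℂ H) (hK : ¬ FiniteDimensional ℂ K)
    [NormedAddCommGroup T] [NormedSpace ℂ T] [CompleteSpace T]
    [NormedAddCommGroup HU] [NormedSpace ℂ HU] [CompleteSpace HU]
    [NormedAddCommGroup KU] [NormedSpace ℂ KU] [CompleteSpace KU]
    [NormedAddCommGroup PU] [NormedSpace ℂ PU] [CompleteSpace PU]
    [NormedAddCommGroup TU] [NormedSpace ℂ TU] [CompleteSpace TU]
    (t : H →L[ℂ] K →L[ℂ] T) (ht : IsProjTensor H K T t)
    (πH : lp (fun _ : I => H) ∞ →ₗ[ℂ] HU) (hπH : IsUltrapower 𝒰 πH)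
    (πK : lp (fun _ : I => K) ∞ →ₗ[ℂ] KU) (hπK : IsUltrapower 𝒰 πK)
    (πT : lp (fun _ : I => T) ∞ →ₗ[ℂ] TU) (hπT : IsUltrapower 𝒰 πT)
    (tU : HU →L[ℂ] KU →L[ℂ] PU) (htU : IsProjTensor HU KU PU tU)
    (ψ : PU →L[ℂ] TU) (hψ : IsUltraTensorMap 𝒰 πH πK πT t tU ψ) :
    ¬ DenseRange ψ ∧ ∃ τ : TU, ‖τ‖ = 1 ∧ Metric.infDist τ (Set.range ψ) = 1 := by
  classical
  haveI : (𝒰 : Filter I).NeBot := 𝒰.neBot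
  -- a function `m : I → ℕ` tending to infinity along `𝒰`
  obtain ⟨U, hU1, hU2, hU3⟩ := h𝒰
  have hmono : Antitone U := antitone_nat_of_succ_le fun n => hU2 n
  have hne : ∀ i, ∃ n, i ∉ U n := by
    intro i
    by_contra h
    push_neg at h
    have : i ∈ ⋂ n, U n := Set.mem_iInter.2 h
    rw [hU3] at this
    exact this
  set m : I → ℕ := fun i => Nat.find (hne i) with hm_def
  have hm : Tendsto m (𝒰 : Filter I) atTop := by
    rw [Filter.tendsto_atTop]
    intro b
    filter_upwards [hU1 b] with i hi
    by_contra h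
    push_neg at h
    exact Nat.find_spec (hne i) (hmono h.le hi)
  have hm1 : Tendsto (fun i => m i + 1) (𝒰 : Filter I) atTop :=
    tendsto_atTop_mono (fun i => Nat.le_succ (m i)) hm
  -- orthonormal sequences
  obtain ⟨e, he⟩ := aux_exists_on_seq hH
  obtain ⟨f, hf⟩ := aux_exists_on_seq hK
  -- the diagonal element
  set z : I → T := fun i => (((m i + 1 : ℕ) : ℂ))⁻¹ •
      ∑ k ∈ Finset.range (m i + 1), t (e k) (f k) with hz_def
  have hz_ge : ∀ i, (1 : ℝ) ≤ ‖z i‖ := by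
    intro i
    have h := aux_core_ineq ht he hf (m i + 1) (Nat.succ_pos _) []
    simp only [List.length_nil, Nat.cast_zero, zero_div, sub_zero, List.map_nil,
      List.sum_nil] at h
    exact h
  have hz_le : ∀ i, ‖z i‖ ≤ 1 := by
    intro i
    set n := m i + 1 with hn_def
    have hn : 0 < n := Nat.succ_pos _
    have h1 : ‖z i‖ = ‖((n : ℕ) : ℂ)⁻¹‖ * ‖∑ k ∈ Finset.range n, t (e k) (f k)‖ :=
      norm_smul _ _
    have h2 : ‖∑ k ∈ Finset.range n, t (e k) (f k)‖ ≤ (n : ℝ) := by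
      refine (norm_sum_le _ _).trans ?_
      calc ∑ k ∈ Finset.range n, ‖t (e k) (f k)‖
          ≤ ∑ _k ∈ Finset.range n, (1 : ℝ) := by
            refine Finset.sum_le_sum fun k _ => ?_
            have := ht.norm_le (e k) (f k)
            rw [he.1 k, hf.1 k, one_mul] at this
            exact this
        _ = (n : ℝ) := by simp
    have h3 : ‖((n : ℕ) : ℂ)⁻¹‖ = ((n : ℝ))⁻¹ := by
      rw [norm_inv]
      norm_num
    rw [h1, h3]
    have hn' : (0 : ℝ) < n := by exact_mod_cast hn
    calc ((n : ℝ))⁻¹ * ‖∑ k ∈ Finset.range n, t (e k) (f k)‖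
        ≤ ((n : ℝ))⁻¹ * (n : ℝ) := by
          exact mul_le_mul_of_nonneg_left h2 (by positivity)
      _ = 1 := inv_mul_cancel₀ (ne_of_gt hn')
  have hz_eq : ∀ i, ‖z i‖ = 1 := fun i => le_antisymm (hz_le i) (hz_ge i)
  have hzmem : Memℓp z ∞ := by
    apply memℓp_infty
    refine ⟨1, ?_⟩
    rintro x ⟨i, rfl⟩
    exact (hz_eq i).le
  set Z : lp (fun _ : I => T) ∞ := ⟨z, hzmem⟩ with hZ_def
  have hZcoe : ∀ i, Z i = z i := fun _ => rfl
  set τ : TU := πT Z with hτ_def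
  have hτ : ‖τ‖ = 1 := by
    have h1 := hπT.2 Z
    have h2 : (fun i => ‖Z i‖) = fun _ => (1 : ℝ) := by
      funext i
      rw [hZcoe i, hz_eq i]
    rw [h2] at h1
    exact tendsto_nhds_unique h1 tendsto_const_nhds
  -- representation of images of sums of elementary tensors
  have build : ∀ L : List (HU × KU), ∃ (w : lp (fun _ : I => T) ∞) (Li : I → List (H × K)),
      (∀ i, (Li i).length = L.length) ∧
      (∀ i, w i = ((Li i).map fun q => t q.1 q.2).sum) ∧
      ψ ((L.map fun q => tU q.1 q.2).sum) = πT w := by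
    intro L
    induction L with
    | nil =>
      refine ⟨0, fun _ => [], fun i => rfl, fun i => ?_, ?_⟩
      · simp [lp.coeFn_zero]
      · simp only [List.map_nil, List.sum_nil, map_zero]
    | cons q L ih =>
      obtain ⟨w, Li, hlen, hco, hψw⟩ := ih
      obtain ⟨X, hX⟩ := hπH.1 q.1
      obtain ⟨Y, hY⟩ := hπK.1 q.2
      have hmem1 : Memℓp (fun i => t (X i) (Y i)) ∞ := by
        apply memℓp_infty
        refine ⟨‖X‖ * ‖Y‖, ?_⟩
        rintro a ⟨i, rfl⟩
        calc ‖t (X i) (Y i)‖ ≤ ‖X i‖ * ‖Y i‖ := ht.norm_le _ _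
          _ ≤ ‖X‖ * ‖Y‖ := by
              exact mul_le_mul (lp.norm_apply_le_norm ENNReal.top_ne_zero X i)
                (lp.norm_apply_le_norm ENNReal.top_ne_zero Y i) (norm_nonneg _) (norm_nonneg _)
      set Z1 : lp (fun _ : I => T) ∞ := ⟨fun i => t (X i) (Y i), hmem1⟩ with hZ1_def
      have h1 : ψ (tU q.1 q.2) = πT Z1 := by
        rw [← hX, ← hY]
        exact hψ X Y Z1 fun i => rfl
      refine ⟨Z1 + w, fun i => (X i, Y i) :: Li i, fun i => by simp [hlen i], fun i => ?_, ?_⟩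
      · have hadd : (Z1 + w) i = Z1 i + w i := by
          rw [lp.coeFn_add]; rfl
        rw [hadd, List.map_cons, List.sum_cons, hco i]
      · rw [List.map_cons, List.sum_cons, map_add, h1, hψw]
        exact (map_add πT Z1 w).symm
  -- the key lower bound
  have key : ∀ L : List (HU × KU), 1 ≤ ‖τ - ψ ((L.map fun q => tU q.1 q.2).sum)‖ := by
    intro L
    obtain ⟨w, Li, hlen, hco, hψw⟩ := build L
    rw [hψw]
    have htend := hπT.2 (Z - w)
    have hsub : πT (Z - w) = τ - πT w := by rw [map_sub]
    rw [hsub] at htend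
    have hlow : ∀ i, 1 - (L.length : ℝ) / ((m i + 1 : ℕ) : ℝ) ≤ ‖(Z - w) i‖ := by
      intro i
      have hcoord : (Z - w) i = z i - w i := by
        rw [lp.coeFn_sub]; rfl
      rw [hcoord, hco i, ← hlen i]
      exact aux_core_ineq ht he hf (m i + 1) (Nat.succ_pos _) (Li i)
    have gtend : Tendsto (fun i => 1 - (L.length : ℝ) / ((m i + 1 : ℕ) : ℝ))
        (𝒰 : Filter I) (nhds 1) := by
      have h0 : Tendsto (fun i => (L.length : ℝ) / ((m i + 1 : ℕ) : ℝ))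
          (𝒰 : Filter I) (nhds 0) :=
        (tendsto_const_div_atTop_nhds_zero_nat (L.length : ℝ)).comp hm1
      have h2 := Tendsto.sub
        (tendsto_const_nhds : Tendsto (fun _ : I => (1 : ℝ)) (𝒰 : Filter I) (nhds 1)) h0
      simpa using h2
    exact le_of_tendsto_of_tendsto' gtend htend hlow
  -- list representation of elements of the span
  have hrep : ∀ p ∈ Submodule.span ℂ {p : PU | ∃ x y, tU x y = p},
      ∃ L : List (HU × KU), p = (L.map fun q => tU q.1 q.2).sum := by
    intro p hp
    induction hp using Submodule.span_induction with
    | mem p hp =>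
      obtain ⟨x, y, rfl⟩ := hp
      exact ⟨[(x, y)], by simp⟩
    | zero => exact ⟨[], by simp⟩
    | add p q _ _ hp hq =>
      obtain ⟨L1, rfl⟩ := hp
      obtain ⟨L2, rfl⟩ := hq
      exact ⟨L1 ++ L2, by simp⟩
    | smul c p _ hp =>
      obtain ⟨L, rfl⟩ := hp
      refine ⟨L.map fun q => (c • q.1, q.2), ?_⟩
      rw [List.smul_sum, List.map_map, List.map_map]
      congr 1
      refine List.map_congr_left fun q _ => ?_
      simp [map_smul]
  -- the lower bound holds for all of `PU` by density
  have hall : ∀ p : PU, 1 ≤ ‖τ - ψ p‖ := by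
    have hclosed : IsClosed {p : PU | 1 ≤ ‖τ - ψ p‖} :=
      isClosed_le continuous_const ((continuous_const.sub ψ.continuous).norm)
    have hsubset : ((Submodule.span ℂ {p : PU | ∃ x y, tU x y = p} : Submodule ℂ PU) : Set PU)
        ⊆ {p : PU | 1 ≤ ‖τ - ψ p‖} := by
      intro p hp
      obtain ⟨L, rfl⟩ := hrep p hp
      exact key L
    intro p
    have hpcl : p ∈ closure ((Submodule.span ℂ {p : PU | ∃ x y, tU x y = p} :
        Submodule ℂ PU) : Set PU) := by
      rw [htU.dense_span.closure_eq]
      trivial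
    have := closure_mono hsubset hpcl
    rwa [hclosed.closure_eq] at this
  -- conclusion
  have hrange_ne : (Set.range ψ).Nonempty := ⟨ψ 0, Set.mem_range_self 0⟩
  have hinf_le : Metric.infDist τ (Set.range ψ) ≤ 1 := by
    have h := Metric.infDist_le_dist_of_mem (x := τ)
      (Set.mem_range_self (f := ψ) (0 : PU))
    rwa [map_zero, dist_zero_right, hτ] at h
  have hinf_ge : ¬ Metric.infDist τ (Set.range ψ) < 1 := by
    intro h
    obtain ⟨a, ⟨p, rfl⟩, hd⟩ := (Metric.infDist_lt_iff hrange_ne).1 h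
    rw [dist_eq_norm] at hd
    exact absurd hd (not_lt.2 (hall p))
  have hinf : Metric.infDist τ (Set.range ψ) = 1 := le_antisymm hinf_le (not_lt.1 hinf_ge)
  refine ⟨?_, τ, hτ, hinf⟩
  intro hdr
  have h0 : Metric.infDist τ (Set.range ψ) = 0 :=
    Metric.infDist_zero_of_mem_closure (by rw [hdr.closure_range]; trivial)
  rw [hinf] at h0
  exact one_ne_zero h0

end UPaper
end
end
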